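/- Let C ⊆ Mat(k,m,F_q) be a linear code and U ⊆ F_q^k a subspace of dimension u. Then |C(U)| = |C| · |C⊥(U⊥)| / q^{m(k−u)}, where C(U) = { M ∈ C : colsp(M) ⊆ U }. -/

import Mathlib

open Matrix Module

section Aux

variable (F : Type*) [Field F] (k m : ℕ)

/-- The trace bilinear form on matrices, `B M N = ∑ i j, M i j * N i j`. -/
noncomputable def Bmat : Matrix (Fin k) (Fin m) F →ₗ[F] Matrix (Fin k) (Fin m) F →ₗ[F] F :=
  LinearMap.mk₂ F (fun M N => ∑ i, ∑ j, M i j * N i j)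
    (fun M M' N => by simp [add_mul, Finset.sum_add_distrib])
    (fun c M N => by simp [Finset.mul_sum, mul_assoc])
    (fun M N N' => by simp [mul_add, Finset.sum_add_distrib])
    (fun c M N => by simp [Finset.mul_sum, mul_left_comm])

variable {F k m}

lemma Bmat_apply (M N : Matrix (Fin k) (Fin m) F) :
    Bmat F k m M N = ∑ i, ∑ j, M i j * N i j := rfl

lemma Bmat_comm (M N : Matrix (Fin k) (Fin m) F) : Bmat F k m M N = Bmat F k m N M := by
  simp [Bmat_apply, mul_comm]

lemma Bmat_trace (M N : Matrix (Fin k) (Fin m) F) : (M * Nᵀ).trace = Bmat F k m M N := by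
  simp [Matrix.trace, Matrix.mul_apply, Bmat_apply, Matrix.diag]

lemma Bmat_single (M : Matrix (Fin k) (Fin m) F) (i : Fin k) (j : Fin m) :
    Bmat F k m M (fun a b => if a = i ∧ b = j then (1 : F) else 0) = M i j := by
  change ∑ a, ∑ b, M a b * (if a = i ∧ b = j then (1 : F) else 0) = M i j
  simp [ite_and, mul_ite]

lemma Bmat_injective : Function.Injective (Bmat F k m) := by
  intro M N h
  funext i j
  have hM := Bmat_single M i j
  have hN := Bmat_single N i j
  rw [← hM, ← hN, h]

lemma Bmat_bijective : Function.Bijective (Bmat F k m) := by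
  refine ⟨Bmat_injective, ?_⟩
  rw [← LinearMap.injective_iff_surjective_of_finrank_eq_finrank
    (Subspace.dual_finrank_eq (K := F) (V := Matrix (Fin k) (Fin m) F)).symm]
  exact Bmat_injective

/-- The linear equivalence to the dual given by the trace form. -/
noncomputable def Bequiv : Matrix (Fin k) (Fin m) F ≃ₗ[F] Dual F (Matrix (Fin k) (Fin m) F) :=
  LinearEquiv.ofBijective (Bmat F k m) Bmat_bijective

variable (F k m) in
/-- The orthogonal of a submodule of matrices w.r.t. the trace form. -/
noncomputable def orthm (S : Submodule F (Matrix (Fin k) (Fin m) F)) :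
    Submodule F (Matrix (Fin k) (Fin m) F) :=
  S.dualAnnihilator.comap (Bmat F k m)

lemma mem_orthm {S : Submodule F (Matrix (Fin k) (Fin m) F)} {N : Matrix (Fin k) (Fin m) F} :
    N ∈ orthm F k m S ↔ ∀ M ∈ S, Bmat F k m M N = 0 := by
  simp only [orthm, Submodule.mem_comap, Submodule.mem_dualAnnihilator]
  exact ⟨fun h M hM => (Bmat_comm M N).trans (h M hM),
    fun h M hM => (Bmat_comm N M).trans (h M hM)⟩

lemma orthm_eq_map (S : Submodule F (Matrix (Fin k) (Fin m) F)) :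
    orthm F k m S = S.dualAnnihilator.map
      ((Bequiv (F := F) (k := k) (m := m)).symm :
        Dual F (Matrix (Fin k) (Fin m) F) →ₗ[F] Matrix (Fin k) (Fin m) F) :=
  Submodule.comap_equiv_eq_map_symm (Bequiv (F := F) (k := k) (m := m)) _

lemma finrank_orthm (S : Submodule F (Matrix (Fin k) (Fin m) F)) :
    finrank F S + finrank F (orthm F k m S) = k * m := by
  have hmap : finrank F (S.dualAnnihilator.map
      ((Bequiv (F := F) (k := k) (m := m)).symm :
        Dual F (Matrix (Fin k) (Fin m) F) →ₗ[F] Matrix (Fin k) (Fin m) F)) =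
      finrank F S.dualAnnihilator :=
    LinearEquiv.finrank_map_eq _ _
  rw [orthm_eq_map, hmap]
  have h1 : finrank F (Matrix (Fin k) (Fin m) F ⧸ S) = finrank F S.dualAnnihilator :=
    (Subspace.quotEquivAnnihilator S).finrank_eq
  have h2 := S.finrank_quotient_add_finrank
  have h3 : finrank F (Matrix (Fin k) (Fin m) F) = k * m := by
    rw [Module.finrank_matrix]; simp
  omega

lemma orthm_inf (S T : Submodule F (Matrix (Fin k) (Fin m) F)) :
    orthm F k m (S ⊓ T) = orthm F k m S ⊔ orthm F k m T := by
  rw [orthm_eq_map, orthm_eq_map, orthm_eq_map, Subspace.dualAnnihilator_inf_eq,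
    Submodule.map_sup]

variable (F k m) in
/-- Matrices all of whose columns lie in `U`. -/
def colsub (U : Submodule F (Fin k → F)) : Submodule F (Matrix (Fin k) (Fin m) F) where
  carrier := {M | ∀ j, (fun i => M i j) ∈ U}
  add_mem' := fun {A B} ha hb j => U.add_mem (ha j) (hb j)
  zero_mem' := fun j => U.zero_mem
  smul_mem' := fun c {M} hM j => U.smul_mem c (hM j)

lemma mem_colsub {U : Submodule F (Fin k → F)} {M : Matrix (Fin k) (Fin m) F} :
    M ∈ colsub F k m U ↔ ∀ j, (fun i => M i j) ∈ U := Iff.rfl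

lemma span_le_iff_mem_colsub {U : Submodule F (Fin k → F)} {M : Matrix (Fin k) (Fin m) F} :
    Submodule.span F (Set.range Mᵀ) ≤ U ↔ M ∈ colsub F k m U := by
  rw [Submodule.span_le]
  exact (Set.range_subset_iff (f := (Mᵀ : Fin m → Fin k → F))).trans Iff.rfl

/-- `colsub U` is isomorphic to `Fin m → U`. -/
noncomputable def colsubEquiv (U : Submodule F (Fin k → F)) :
    (Fin m → U) ≃ₗ[F] colsub F k m U where
  toFun f := ⟨fun i j => (f j : Fin k → F) i, fun j => (f j).2⟩
  invFun M := fun j => ⟨fun i => (M : Matrix (Fin k) (Fin m) F) i j, M.2 j⟩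
  map_add' f g := rfl
  map_smul' c f := rfl
  left_inv f := rfl
  right_inv M := rfl

lemma finrank_colsub (U : Submodule F (Fin k → F)) :
    finrank F (colsub F k m U) = m * finrank F U := by
  rw [← LinearEquiv.finrank_eq (colsubEquiv U), Module.finrank_pi_fintype]
  simp [Finset.sum_const, mul_comm]

lemma orthm_colsub (U Uperp : Submodule F (Fin k → F))
    (hUperp : (Uperp : Set (Fin k → F)) = {x | ∀ y ∈ U, ∑ i, x i * y i = 0}) :
    orthm F k m (colsub F k m U) = colsub F k m Uperp := by
  have hmem : ∀ x : Fin k → F, x ∈ Uperp ↔ ∀ y ∈ U, ∑ i, x i * y i = 0 := by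
    intro x
    rw [← SetLike.mem_coe, hUperp]
    exact Iff.rfl
  ext N
  rw [mem_orthm, mem_colsub]
  constructor
  · intro h j
    rw [hmem]
    intro y hy
    have hM : (fun i j' => if j' = j then y i else 0) ∈ colsub F k m U := by
      intro j'
      by_cases hj : j' = j
      · subst hj; simpa using hy
      · simp only [hj, if_false]
        exact U.zero_mem
    calc ∑ i, N i j * y i
        = ∑ i, ∑ j', (if j' = j then y i else 0) * N i j' := by
          refine Finset.sum_congr rfl fun i _ => ?_
          simp [ite_mul, Finset.sum_ite_eq', mul_comm]
      _ = 0 := h _ hM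
  · intro h M hM
    rw [Bmat_apply, Finset.sum_comm]
    refine Finset.sum_eq_zero fun j _ => ?_
    have := (hmem (fun i => N i j)).mp (h j) (fun i => M i j) (hM j)
    simpa [mul_comm] using this

lemma card_submodule [Fintype F] (S : Submodule F (Matrix (Fin k) (Fin m) F)) :
    Nat.card S = Fintype.card F ^ finrank F S := by
  have : Fintype S := Fintype.ofFinite _
  rw [Nat.card_eq_fintype_card, card_eq_pow_finrank (K := F)]

end Aux

/-- For a linear code `C ⊆ Mat(k,m,F_q)` and a subspace `U ⊆ F_q^k` of dimension `u`:
`|C(U)| · q^{m(k-u)} = |C| · |C⊥(U⊥)|`. -/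
theorem card_code_restricted_to_subspace (F : Type*) [Field F] [Fintype F] (k m : ℕ)
    (q : ℕ) (hq : q = Fintype.card F)
    (C : Submodule F (Matrix (Fin k) (Fin m) F))
    (U Uperp : Submodule F (Fin k → F)) (u : ℕ) (hu : u = finrank F U)
    (hUperp : (Uperp : Set (Fin k → F)) = {x | ∀ y ∈ U, ∑ i, x i * y i = 0}) :
    Nat.card {M : Matrix (Fin k) (Fin m) F //
        M ∈ C ∧ Submodule.span F (Set.range Mᵀ) ≤ U} * q ^ (m * (k - u)) =
      Nat.card C *
        Nat.card {N : Matrix (Fin k) (Fin m) F //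
          (∀ M ∈ C, (M * Nᵀ).trace = 0) ∧ Submodule.span F (Set.range Nᵀ) ≤ Uperp} := by
  -- identify the two subtypes with intersections of submodules
  have hL : Nat.card {M : Matrix (Fin k) (Fin m) F //
      M ∈ C ∧ Submodule.span F (Set.range Mᵀ) ≤ U} =
      Nat.card (C ⊓ colsub F k m U : Submodule F (Matrix (Fin k) (Fin m) F)) := by
    apply Nat.card_congr
    apply Equiv.subtypeEquivRight
    intro M
    rw [Submodule.mem_inf, span_le_iff_mem_colsub]
  have hR : Nat.card {N : Matrix (Fin k) (Fin m) F //
      (∀ M ∈ C, (M * Nᵀ).trace = 0) ∧ Submodule.span F (Set.range Nᵀ) ≤ Uperp} =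
      Nat.card (orthm F k m C ⊓ colsub F k m Uperp :
        Submodule F (Matrix (Fin k) (Fin m) F)) := by
    apply Nat.card_congr
    apply Equiv.subtypeEquivRight
    intro N
    rw [Submodule.mem_inf, span_le_iff_mem_colsub, mem_orthm]
    simp only [Bmat_trace]
  rw [hL, hR, card_submodule, card_submodule, card_submodule, ← hq, ← pow_add, ← pow_add]
  congr 1
  -- now a dimension count
  have h1 := finrank_orthm (C ⊓ colsub F k m U)
  have h2 := finrank_orthm C
  have h3 := finrank_orthm (colsub F k m U)
  have h4 : finrank F (colsub F k m U : Submodule F (Matrix (Fin k) (Fin m) F)) = m * u := by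
    rw [finrank_colsub, hu]
  have h5 := orthm_inf C (colsub F k m U)
  have h6 := Submodule.finrank_sup_add_finrank_inf_eq (orthm F k m C) (orthm F k m (colsub F k m U))
  rw [← h5] at h6
  rw [orthm_colsub U Uperp hUperp] at h3 h6
  have h7 : u ≤ k := by
    rw [hu]
    have := Submodule.finrank_le U
    rwa [Module.finrank_fin_fun] at this
  have h8 : m * (k - u) + m * u = m * k := by
    rw [← Nat.mul_add]
    congr 1
    omega
  have h9 : k * m = m * k := Nat.mul_comm _ _
  omega
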